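/- arXiv:1406.1979 — 10 statements merged into one kernel-verified Lean document; each statement's English description precedes it below -/
import Mathlib

section
/- Let (S,·) be a semigroup and f : S → ℂ a function. If there exists ε > 0 such that |f(x·y) − f(x)f(y)| ≤ ε for all x, y ∈ S, then either f is bounded (specifically |f(x)| ≤ (1 + √(1+4ε))/2 for all x ∈ S) or f satisfies f(x·y) = f(x)f(y) for all x, y ∈ S. -/
theorem stmt_0 {S : Type*} [Semigroup S] (f : S → ℂ) (ε : ℝ) (hε : 0 < ε)
    (h : ∀ x y : S, ‖f (x * y) - f x * f y‖ ≤ ε) :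
    (∀ x : S, ‖f x‖ ≤ (1 + Real.sqrt (1 + 4 * ε)) / 2) ∨
      (∀ x y : S, f (x * y) = f x * f y) := by
  set β : ℝ := (1 + Real.sqrt (1 + 4 * ε)) / 2 with hβdef
  by_cases hb : ∀ x : S, ‖f x‖ ≤ β
  · exact Or.inl hb
  push_neg at hb
  obtain ⟨z, hz⟩ := hb
  have hsq : Real.sqrt (1 + 4 * ε) ^ 2 = 1 + 4 * ε :=
    Real.sq_sqrt (by linarith)
  have hs1 : (1 : ℝ) ≤ Real.sqrt (1 + 4 * ε) := by
    nlinarith [Real.sqrt_nonneg (1 + 4 * ε)]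
  have hβ1 : (1 : ℝ) ≤ β := by rw [hβdef]; linarith
  have hβsq : β ^ 2 = β + ε := by rw [hβdef]; nlinarith
  set p : ℝ := ‖f z‖ - β with hpdef
  have hp : 0 < p := by simp only [hpdef]; linarith
  -- squaring grows
  have step : ∀ x : S, ∀ q : ℝ, 0 ≤ q → β + q ≤ ‖f x‖ →
      β + 2 * q ≤ ‖f (x * x)‖ := by
    intro x q hq hx
    have h1 := h x x
    have h2 : |‖f (x * x)‖ - ‖f x * f x‖|
        ≤ ‖f (x * x) - f x * f x‖ :=
      abs_norm_sub_norm_le _ _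
    have h3 : ‖f x * f x‖ - ‖f (x * x)‖
        ≤ ‖f (x * x) - f x * f x‖ := by
      have := neg_abs_le (‖f (x * x)‖ - ‖f x * f x‖)
      linarith
    rw [norm_mul] at h3
    nlinarith
  -- iterates
  set a : ℕ → S := fun n => Nat.rec (motive := fun _ => S) z (fun _ s => s * s) n with hadef
  have ha : ∀ n : ℕ, β + 2 ^ n * p ≤ ‖f (a n)‖ := by
    intro n
    induction n with
    | zero => simp [hadef, hpdef]
    | succ n ih =>
        have := step (a n) (2 ^ n * p) (by positivity) ih
        have heq : a (n + 1) = a n * a n := rfl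
        rw [heq]
        calc β + 2 ^ (n + 1) * p = β + 2 * (2 ^ n * p) := by ring
        _ ≤ _ := this
  right
  intro x y
  by_contra hne
  set d : ℝ := ‖f (x * y) - f x * f y‖ with hddef
  have hd : 0 < d := by
    rw [hddef, norm_pos_iff]
    intro hc
    exact hne (sub_eq_zero.mp hc)
  -- key bound: for all n, d * |f (a n)| ≤ 2ε + ε |f x|
  have key : ∀ n : ℕ, d * ‖f (a n)‖ ≤ 2 * ε + ε * ‖f x‖ := by
    intro n
    set w := a n with hwdef
    have h1 := h (x * y) w
    have h2 := h x (y * w)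
    have h3 := h y w
    have hassoc : (x * y) * w = x * (y * w) := mul_assoc x y w
    set A : ℂ := -(f ((x * y) * w) - f (x * y) * f w) with hA
    set B : ℂ := f (x * (y * w)) - f x * f (y * w) with hB
    set C : ℂ := f x * (f (y * w) - f y * f w) with hC
    have e1 : f (x * y) * f w - f x * f y * f w = A + B + C := by
      rw [hA, hB, hC, hassoc]; ring
    have habs : ‖f (x * y) * f w - f x * f y * f w‖
        = d * ‖f w‖ := by
      rw [show f (x * y) * f w - f x * f y * f w
          = (f (x * y) - f x * f y) * f w from by ring, norm_mul, hddef]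
    have t1 : ‖A + B + C‖ ≤ ‖A‖ + ‖B‖ + ‖C‖ := by
      calc ‖A + B + C‖ ≤ ‖A + B‖ + ‖C‖ :=
            norm_add_le _ _
        _ ≤ ‖A‖ + ‖B‖ + ‖C‖ := by
            linarith [norm_add_le A B]
    have hAle : ‖A‖ ≤ ε := by rw [hA, norm_neg]; exact h1
    have hCle : ‖C‖ ≤ ‖f x‖ * ε := by
      rw [hC, norm_mul]
      exact mul_le_mul_of_nonneg_left h3 (norm_nonneg (f x))
    have := e1 ▸ habs
    nlinarith [t1, hAle, hCle, h2, this]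
  -- choose n large
  obtain ⟨n, hn⟩ := pow_unbounded_of_one_lt ((2 * ε + ε * ‖f x‖) / d / p)
    (by norm_num : (1:ℝ) < 2)
  have hfn := ha n
  have h2 : (2 * ε + ε * ‖f x‖) / d < 2 ^ n * p := by
    rw [div_lt_iff₀ hp] at hn; linarith
  have hβ0 : 0 < β := by linarith
  have hgrow : (2 * ε + ε * ‖f x‖) / d < ‖f (a n)‖ := by
    clear_value β p d
    linarith
  rw [div_lt_iff₀ hd] at hgrow
  have := key n
  nlinarith [norm_nonneg (f (a n))]
end

section
/- Let (S,·) be a semigroup, f : S → ℂ a function, ε > 0, and a ∈ S an element with |f(a)| > 1 such that |f(a·y) − f(a)f(y)| ≤ ε for all y ∈ S. Then there exists a unique function T : S → ℂ such that T(a·y) = f(a)T(y) for all y ∈ S and |f(y) − T(y)| ≤ ε/(|f(a)| − 1) for all y ∈ S. -/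
open Filter Topology

theorem stmt_1 {S : Type*} [Semigroup S] (f : S → ℂ) (ε : ℝ) (hε : 0 < ε)
    (a : S) (ha : 1 < ‖f a‖)
    (h : ∀ y : S, ‖f (a * y) - f a * f y‖ ≤ ε) :
    ∃! T : S → ℂ, (∀ y : S, T (a * y) = f a * T y) ∧
      (∀ y : S, ‖f y - T y‖ ≤ ε / (‖f a‖ - 1)) := by
  set r : ℝ := ‖f a‖ with hr
  have hr0 : (0:ℝ) < r := lt_trans one_pos ha
  have hr1 : (0:ℝ) < r - 1 := by linarith
  have hfa0 : f a ≠ 0 := by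
    intro h0
    rw [hr, h0, norm_zero] at ha
    linarith
  have hrinv : (1:ℝ)/r < 1 := by
    rw [div_lt_one hr0]; exact ha
  set u : ℕ → S → S := fun n y => (fun z => a * z)^[n] y with hu
  set g : S → ℕ → ℂ := fun y n => f (u n y) / (f a) ^ n with hg
  have habs : ∀ n, ‖(f a) ^ n‖ = r ^ n := by
    intro n; rw [norm_pow]
  have hgeo : ∀ n : ℕ, (ε / r) * (1/r) ^ n = ε / r ^ (n+1) := by
    intro n
    rw [div_pow, one_pow, div_mul_div_comm, mul_one, ← pow_succ']
  have key : ∀ y n, dist (g y n) (g y (n+1)) ≤ (ε / r) * (1/r) ^ n := by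
    intro y n
    have hiter : u (n+1) y = a * u n y := by
      simp [hu, Function.iterate_succ_apply']
    rw [Complex.dist_eq]
    have heq : g y n - g y (n+1) = -((f (a * u n y) - f a * f (u n y)) / (f a)^(n+1)) := by
      rw [hg]; simp only []
      rw [hiter]
      field_simp
      ring
    rw [heq, norm_neg, norm_div, habs, hgeo]
    exact div_le_div_of_nonneg_right (h _) (by positivity) |>.trans_eq rfl
  have hcau : ∀ y, CauchySeq (g y) := fun y =>
    cauchySeq_of_le_geometric (1/r) (ε/r) hrinv (key y)
  choose T hT using fun y => cauchySeq_tendsto_of_complete (hcau y)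
  have hbound : ∀ y, ‖f y - T y‖ ≤ ε / (r - 1) := by
    intro y
    have h0 : g y 0 = f y := by simp [hg, hu]
    have hd := dist_le_of_le_geometric_of_tendsto₀ (1/r) (ε/r) hrinv (key y) (hT y)
    rw [h0, Complex.dist_eq] at hd
    have heq : ε / r / (1 - 1/r) = ε / (r - 1) := by
      rw [one_sub_div hr0.ne']
      field_simp
    rwa [heq] at hd
  have hperiod : ∀ y, T (a * y) = f a * T y := by
    intro y
    have h1 : ∀ n, g (a * y) n = f a * g y (n+1) := by
      intro n
      have hux : u n (a * y) = u (n+1) y := by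
        simp [hu, Function.iterate_succ_apply]
      rw [hg]; simp only []
      rw [hux, pow_succ]
      field_simp
    have t1 : Tendsto (g (a*y)) atTop (𝓝 (f a * T y)) := by
      have hfe : g (a*y) = fun n => f a * g y (n+1) := funext h1
      rw [hfe]
      exact ((hT y).comp (tendsto_add_atTop_nat 1)).const_mul _
    exact tendsto_nhds_unique (hT (a*y)) t1
  refine ⟨T, ⟨hperiod, hbound⟩, ?_⟩
  rintro T' ⟨hT'1, hT'2⟩
  funext y
  have hdiff : ∀ n, T' (u n y) - T (u n y) = (f a)^n * (T' y - T y) := by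
    intro n
    induction n with
    | zero => simp [hu]
    | succ n ih =>
      have hux : u (n+1) y = a * u n y := by simp [hu, Function.iterate_succ_apply']
      rw [hux, hT'1, hperiod, pow_succ]
      linear_combination (f a) * ih
  have hbd : ∀ n, r^n * ‖T' y - T y‖ ≤ 2 * (ε/(r-1)) := by
    intro n
    calc r^n * ‖T' y - T y‖ = ‖T' (u n y) - T (u n y)‖ := by
          rw [hdiff n, norm_mul, habs]
      _ ≤ ‖T' (u n y) - f (u n y)‖ + ‖f (u n y) - T (u n y)‖ := by
          simpa using norm_sub_le_norm_sub_add_norm_sub (T' (u n y)) (f (u n y)) (T (u n y))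
      _ ≤ ε/(r-1) + ε/(r-1) := by
          gcongr
          · rw [← norm_neg]; simpa using hT'2 (u n y)
          · exact hbound _
      _ = 2 * (ε/(r-1)) := by ring
  have hzero : ‖T' y - T y‖ = 0 := by
    by_contra hne
    have hpos : 0 < ‖T' y - T y‖ :=
      lt_of_le_of_ne (by positivity) (Ne.symm hne)
    obtain ⟨n, hn⟩ := pow_unbounded_of_one_lt (2 * (ε/(r-1)) / ‖T' y - T y‖) ha
    have h2 := hbd n
    have h3 := (div_lt_iff₀ hpos).mp hn
    linarith
  exact sub_eq_zero.mp (norm_eq_zero.mp hzero)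
end

section
/- Let (S,·) be a semigroup, f : S → ℂ, ε > 0, and a ∈ S with |f(a)| > 1 such that |f(x·y) − f(x)f(y)| ≤ ε for all x, y ∈ S. Let T(y) = lim_{n→∞} f(aⁿ·y)/f(a)ⁿ (this limit exists). Then T(x·y) = T(x)f(y) for all x, y ∈ S. -/
theorem stmt_2 {S : Type*} [Semigroup S] (f : S → ℂ) (ε : ℝ) (hε : 0 < ε)
    (a : S) (ha : 1 < ‖f a‖)
    (h : ∀ x y : S, ‖f (x * y) - f x * f y‖ ≤ ε)
    (T : S → ℂ)
    (hT : ∀ y : S, Filter.Tendsto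
      (fun n : ℕ => f ((fun z => a * z)^[n] y) / (f a) ^ n) Filter.atTop (nhds (T y))) :
    ∀ x y : S, T (x * y) = T x * f y := by
  intro x y
  have hiter : ∀ n : ℕ, (fun z => a * z)^[n] (x * y) = ((fun z => a * z)^[n] x) * y := by
    intro n
    induction n with
    | zero => simp
    | succ n ih => simp [Function.iterate_succ_apply', ih, mul_assoc]
  have hfa0 : (f a : ℂ) ≠ 0 := by
    intro h0
    rw [h0] at ha; simp at ha; linarith
  -- difference tends to 0
  have hdiff : Filter.Tendsto
      (fun n : ℕ => f ((fun z => a * z)^[n] (x * y)) / (f a) ^ n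
        - f ((fun z => a * z)^[n] x) / (f a) ^ n * f y) Filter.atTop (nhds 0) := by
    have hbound : ∀ n : ℕ, ‖f ((fun z => a * z)^[n] (x * y)) / (f a) ^ n
        - f ((fun z => a * z)^[n] x) / (f a) ^ n * f y‖ ≤ ε * ((‖f a‖)⁻¹) ^ n := by
      intro n
      have : f ((fun z => a * z)^[n] (x * y)) / (f a) ^ n
          - f ((fun z => a * z)^[n] x) / (f a) ^ n * f y
          = (f (((fun z => a * z)^[n] x) * y) - f ((fun z => a * z)^[n] x) * f y) / (f a) ^ n := by
        rw [hiter n]; ring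
      rw [this, norm_div]
      rw [div_le_iff₀ (norm_pos_iff.mpr (pow_ne_zero _ hfa0))]
      calc ‖f ((fun z => a * z)^[n] x * y) - f ((fun z => a * z)^[n] x) * f y‖
          ≤ ε := h _ _
        _ = ε * ((‖f a‖)⁻¹) ^ n * ‖(f a : ℂ) ^ n‖ := by
            rw [norm_pow]
            rw [mul_assoc, ← mul_pow, inv_mul_cancel₀ (norm_ne_zero_iff.mpr hfa0), one_pow, mul_one]
    have hlim : Filter.Tendsto (fun n : ℕ => ε * ((‖f a‖)⁻¹) ^ n)
        Filter.atTop (nhds 0) := by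
      have : Filter.Tendsto (fun n : ℕ => ((‖f a‖)⁻¹) ^ n) Filter.atTop (nhds 0) := by
        apply tendsto_pow_atTop_nhds_zero_of_lt_one
        · positivity
        · rw [inv_lt_one_iff₀]; right; exact ha
      simpa using this.const_mul ε
    exact squeeze_zero_norm hbound hlim
  have h2 : Filter.Tendsto
      (fun n : ℕ => f ((fun z => a * z)^[n] x) / (f a) ^ n * f y) Filter.atTop
      (nhds (T x * f y)) := (hT x).mul_const _
  have h3 : Filter.Tendsto
      (fun n : ℕ => f ((fun z => a * z)^[n] (x * y)) / (f a) ^ n) Filter.atTop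
      (nhds (T x * f y)) := by
    have := hdiff.add h2
    simpa using this
  exact tendsto_nhds_unique (hT (x * y)) h3
end

section
/- Let (S,·) be a commutative semigroup, B a complex Banach space, g : S → ℂ and ψ : S² → [0,∞) functions. Suppose f : S → B satisfies ‖f(x·y) − g(x)f(y)‖ ≤ ψ(x,y) for all x, y ∈ S, and there exists a ∈ S with |g(a)| > 1 and ψ(x, y·a) ≤ ψ(x,y) for all x, y ∈ S. Then there exists a function T : S → B with T(x·y) = g(x)T(y) for all x, y ∈ S and ‖f(y) − T(y)‖ ≤ ψ(a,y)/(|g(a)| − 1) for all y ∈ S. -/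
open Filter Topology

theorem stmt_3 {S : Type*} [CommSemigroup S] {B : Type*} [NormedAddCommGroup B]
    [NormedSpace ℂ B] [CompleteSpace B]
    (g : S → ℂ) (ψ : S → S → ℝ) (hψ : ∀ x y : S, 0 ≤ ψ x y)
    (f : S → B) (h : ∀ x y : S, ‖f (x * y) - g x • f y‖ ≤ ψ x y)
    (a : S) (ha : 1 < ‖g a‖)
    (haψ : ∀ x y : S, ψ x (y * a) ≤ ψ x y) :
    ∃ T : S → B, (∀ x y : S, T (x * y) = g x • T y) ∧
      (∀ y : S, ‖f y - T y‖ ≤ ψ a y / (‖g a‖ - 1)) := by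
  set c : ℂ := g a with hc
  have hc1 : (1:ℝ) < ‖c‖ := ha
  have hcpos : 0 < ‖c‖ := lt_trans one_pos hc1
  have hc0 : c ≠ 0 := by
    intro h0
    rw [h0, norm_zero] at hc1; linarith
  set b : S → ℕ → S := fun y n => (fun s => s * a)^[n] y with hbdef
  have hbs : ∀ y n, b y (n+1) = b y n * a := fun y n => Function.iterate_succ_apply' _ _ _
  have hbmul : ∀ x y n, b (x*y) n = x * b y n := by
    intro x y n; induction n with
    | zero => rfl
    | succ n ih => rw [hbs, hbs, ih, mul_assoc]
  have hψb : ∀ x y n, ψ x (b y n) ≤ ψ x y := by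
    intro x y n; induction n with
    | zero => exact le_refl _
    | succ n ih => rw [hbs]; exact le_trans (haψ x (b y n)) ih
  set u : S → ℕ → B := fun y n => (c⁻¹)^n • f (b y n) with hudef
  set r : ℝ := (‖c‖)⁻¹ with hrdef
  have hrabs : ‖c⁻¹‖ = r := norm_inv _
  have hr0 : 0 < r := inv_pos.mpr hcpos
  have hr1 : r < 1 := inv_lt_one_of_one_lt₀ hc1
  have hkey : ∀ y n, ‖f (a * b y n) - c • f (b y n)‖ ≤ ψ a y :=
    fun y n => le_trans (h a (b y n)) (hψb a y n)
  have hdist : ∀ y n, dist (u y n) (u y (n+1)) ≤ (ψ a y * r) * r ^ n := by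
    intro y n
    have : u y n - u y (n+1) = (c⁻¹)^(n+1) • (c • f (b y n) - f (a * b y n)) := by
      simp only [hudef, hbs, mul_comm (b y n) a, smul_sub, pow_succ]
      rw [smul_smul, mul_assoc, inv_mul_cancel₀ hc0, mul_one]
    rw [dist_eq_norm, this, norm_smul]
    have h2 : ‖(c⁻¹)^(n+1)‖ = r ^ (n+1) := by
      rw [norm_pow, hrabs]
    rw [h2, pow_succ, norm_sub_rev]
    calc r ^ n * r * ‖f (a * b y n) - c • f (b y n)‖
        ≤ r ^ n * r * ψ a y := by
          apply mul_le_mul_of_nonneg_left (hkey y n)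
          positivity
      _ = ψ a y * r * r ^ n := by ring
  have hcauchy : ∀ y, CauchySeq (u y) := fun y =>
    cauchySeq_of_le_geometric r _ hr1 (hdist y)
  set T : S → B := fun y => limUnder atTop (u y) with hT
  have htend : ∀ y, Tendsto (u y) atTop (𝓝 (T y)) := fun y => (hcauchy y).tendsto_limUnder
  refine ⟨T, ?_, ?_⟩
  · intro x y
    have hzero : Tendsto (fun n => u (x*y) n - g x • u y n) atTop (𝓝 0) := by
      refine squeeze_zero_norm (a := fun n => ψ x y * r ^ n) ?_ ?_
      · intro n
        have : u (x*y) n - g x • u y n = (c⁻¹)^n • (f (x * b y n) - g x • f (b y n)) := by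
          simp only [hudef, hbmul, smul_sub, smul_comm (g x) ((c⁻¹)^n)]
        rw [this, norm_smul, norm_pow, hrabs]
        calc r ^ n * ‖f (x * b y n) - g x • f (b y n)‖
            ≤ r ^ n * ψ x y := by
              apply mul_le_mul_of_nonneg_left (le_trans (h x (b y n)) (hψb x y n))
              positivity
          _ = ψ x y * r ^ n := by ring
      · have := (tendsto_pow_atTop_nhds_zero_of_lt_one hr0.le hr1).const_mul (ψ x y)
        simpa using this
    have h2 : Tendsto (fun n => g x • u y n) atTop (𝓝 (g x • T y)) :=
      (htend y).const_smul (g x)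
    have h3 : Tendsto (u (x*y)) atTop (𝓝 (g x • T y)) := by
      have := hzero.add h2
      simpa using this
    exact tendsto_nhds_unique (htend (x*y)) h3
  · intro y
    have hb := dist_le_of_le_geometric_of_tendsto₀ r (ψ a y * r) hr1 (hdist y) (htend y)
    have hu0 : u y 0 = f y := by simp [hudef, hbdef]
    rw [hu0, dist_eq_norm] at hb
    have heq : ψ a y * r / (1 - r) = ψ a y / (‖c‖ - 1) := by
      rw [hrdef]
      field_simp
    rwa [heq] at hb
end

section
/- Let (S,+) be a commutative semigroup, E a complex normed space, and ψ : S² → [0,∞). Suppose f : S → E satisfies ‖f(x+y) − f(x) − f(y)‖ ≤ ψ(x,y) for all x, y ∈ S, and that for all fixed x₀, y₀, x, y ∈ S: (i) lim_{n→∞} (1/n)∑_{i=0}^{n−1} ψ(x + i·x₀, x₀) = 0, and (ii) lim_{n→∞} (1/n) ψ(x + n·x₀, y + n·y₀) = 0. Then f(x+y) = f(x) + f(y) for all x, y ∈ S. -/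
open Filter Finset

theorem stmt_10 {S : Type*} [AddCommSemigroup S] {E : Type*} [NormedAddCommGroup E]
    [NormedSpace ℂ E]
    (ψ : S → S → ℝ) (hψ : ∀ x y : S, 0 ≤ ψ x y)
    (f : S → E) (h : ∀ x y : S, ‖f (x + y) - f x - f y‖ ≤ ψ x y)
    (h1 : ∀ x₀ x : S, Filter.Tendsto
      (fun n : ℕ => (1 / (n : ℝ)) * ∑ i ∈ Finset.range n, ψ ((fun z => z + x₀)^[i] x) x₀)
      Filter.atTop (nhds 0))
    (h2 : ∀ x₀ y₀ x y : S, Filter.Tendsto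
      (fun n : ℕ => (1 / (n : ℝ)) * ψ ((fun z => z + x₀)^[n] x) ((fun z => z + y₀)^[n] y))
      Filter.atTop (nhds 0)) :
    ∀ x y : S, f (x + y) = f x + f y := by
  have key : ∀ (x₀ x : S) (n : ℕ),
      ‖f ((fun z => z + x₀)^[n] x) - f x - n • f x₀‖ ≤
        ∑ i ∈ Finset.range n, ψ ((fun z => z + x₀)^[i] x) x₀ := by
    intro x₀ x n
    induction n with
    | zero => simp
    | succ n ih =>
      rw [Function.iterate_succ_apply', Finset.sum_range_succ]
      have heq : f ((fun z => z + x₀)^[n] x + x₀) - f x - (n + 1) • f x₀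
          = (f ((fun z => z + x₀)^[n] x + x₀) - f ((fun z => z + x₀)^[n] x) - f x₀)
            + (f ((fun z => z + x₀)^[n] x) - f x - n • f x₀) := by
        rw [succ_nsmul]; abel
      rw [heq]
      calc _ ≤ ‖f ((fun z => z + x₀)^[n] x + x₀) - f ((fun z => z + x₀)^[n] x) - f x₀‖
            + ‖f ((fun z => z + x₀)^[n] x) - f x - n • f x₀‖ := norm_add_le _ _
        _ ≤ _ := by
            have := h ((fun z => z + x₀)^[n] x) x₀
            linarith
  have lim : ∀ x₀ x : S, Tendsto (fun n : ℕ => ((n : ℝ))⁻¹ • f ((fun z => z + x₀)^[n] x))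
      atTop (nhds (f x₀)) := by
    intro x₀ x
    rw [tendsto_iff_norm_sub_tendsto_zero]
    have hb : Tendsto (fun n : ℕ =>
        (1 / (n : ℝ)) * ∑ i ∈ Finset.range n, ψ ((fun z => z + x₀)^[i] x) x₀
        + (n : ℝ)⁻¹ * ‖f x‖) atTop (nhds 0) := by
      have h0 : Tendsto (fun n : ℕ => ((n : ℝ))⁻¹ * ‖f x‖) atTop (nhds 0) := by
        have h0' := tendsto_one_div_atTop_nhds_zero_nat.mul_const ‖f x‖
        rw [zero_mul] at h0'
        simpa [one_div] using h0'
      simpa using (h1 x₀ x).add h0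
    refine squeeze_zero' (by filter_upwards with n; positivity) ?_ hb
    filter_upwards [eventually_ge_atTop 1] with n hn
    have hn' : ((n : ℝ)) ≠ 0 := by positivity
    have heq : ((n : ℝ))⁻¹ • f ((fun z => z + x₀)^[n] x) - f x₀
        = ((n : ℝ))⁻¹ • (f ((fun z => z + x₀)^[n] x) - f x - n • f x₀)
          + ((n : ℝ))⁻¹ • f x := by
      rw [← Nat.cast_smul_eq_nsmul ℝ, smul_sub, smul_sub, smul_smul,
        inv_mul_cancel₀ hn', one_smul]
      abel
    rw [heq]
    calc _ ≤ ‖((n : ℝ))⁻¹ • (f ((fun z => z + x₀)^[n] x) - f x - n • f x₀)‖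
          + ‖((n : ℝ))⁻¹ • f x‖ := norm_add_le _ _
      _ ≤ (1 / (n : ℝ)) * ∑ i ∈ Finset.range n, ψ ((fun z => z + x₀)^[i] x) x₀
          + (n : ℝ)⁻¹ * ‖f x‖ := by
          rw [norm_smul, norm_smul, norm_inv, Real.norm_natCast, one_div]
          have := key x₀ x n
          have hpos : (0 : ℝ) ≤ ((n : ℝ))⁻¹ := by positivity
          gcongr
  intro x y
  have hiter : ∀ n : ℕ, (fun z => z + (x + y))^[n] (x + y)
      = (fun z => z + x)^[n] x + (fun z => z + y)^[n] y := by
    intro n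
    induction n with
    | zero => rfl
    | succ n ih =>
      simp only [Function.iterate_succ_apply', ih, add_add_add_comm]
  have hA := lim (x + y) (x + y)
  have hB := lim x x
  have hC := lim y y
  have hdiff : Tendsto (fun n : ℕ => ((n : ℝ))⁻¹ • f ((fun z => z + (x + y))^[n] (x + y))
      - ((n : ℝ))⁻¹ • f ((fun z => z + x)^[n] x) - ((n : ℝ))⁻¹ • f ((fun z => z + y)^[n] y))
      atTop (nhds (f (x + y) - f x - f y)) := (hA.sub hB).sub hC
  have hzero : Tendsto (fun n : ℕ => ((n : ℝ))⁻¹ • f ((fun z => z + (x + y))^[n] (x + y))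
      - ((n : ℝ))⁻¹ • f ((fun z => z + x)^[n] x) - ((n : ℝ))⁻¹ • f ((fun z => z + y)^[n] y))
      atTop (nhds 0) := by
    rw [tendsto_zero_iff_norm_tendsto_zero]
    refine squeeze_zero (fun n => norm_nonneg _) ?_ (h2 x y x y)
    intro n
    rw [hiter n, ← smul_sub, ← smul_sub, norm_smul, norm_inv, Real.norm_natCast, ← one_div]
    exact mul_le_mul_of_nonneg_left (h _ _) (by positivity)
  have := tendsto_nhds_unique hdiff hzero
  have h' : f (x + y) - f x - f y = 0 := this
  have := sub_eq_zero.mp (by rw [sub_sub] at h'; exact h')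
  exact this
end

section
/- Let E₁, E₂ be complex normed spaces and J : E₁ → E₂ a function with J(0) = 0. Then ‖2J((x+y)/2) − J(x) − J(y)‖ → 0 as ‖x‖ + ‖y‖ → ∞ if and only if 2J((x+y)/2) = J(x) + J(y) for all x, y ∈ E₁. -/
theorem stmt_15 {E₁ E₂ : Type*} [NormedAddCommGroup E₁] [NormedSpace ℂ E₁]
    [NormedAddCommGroup E₂] [NormedSpace ℂ E₂]
    (J : E₁ → E₂) (hJ0 : J 0 = 0) :
    (∀ ε : ℝ, 0 < ε → ∃ M : ℝ, 0 < M ∧ ∀ x y : E₁, M < ‖x‖ + ‖y‖ →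
      ‖(2 : ℂ) • J (((2 : ℂ)⁻¹) • (x + y)) - J x - J y‖ ≤ ε) ↔
    (∀ x y : E₁, (2 : ℂ) • J (((2 : ℂ)⁻¹) • (x + y)) = J x + J y) := by
  constructor
  · intro h x y
    by_cases hv : ∃ v : E₁, v ≠ 0
    · obtain ⟨v, hv⟩ := hv
      have hvn : (0:ℝ) < ‖v‖ := norm_pos_iff.mpr hv
      have key : ∀ ε : ℝ, 0 < ε →
          ‖(2 : ℂ) • J (((2 : ℂ)⁻¹) • (x + y)) - J x - J y‖ ≤ 5 * ε := by
        intro ε hε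
        obtain ⟨M, hM, hMε⟩ := h ε hε
        set R : ℝ := M + ‖x‖ + ‖y‖ + 1 with hR
        have hRpos : (0:ℝ) < R := by positivity
        set z : E₁ := ((R / ‖v‖ : ℝ) : ℂ) • v with hz
        have hnz : ‖z‖ = R := by
          rw [hz, norm_smul, Complex.norm_real, Real.norm_eq_abs,
            abs_of_pos (div_pos hRpos hvn), div_mul_cancel₀ _ (ne_of_gt hvn)]
        set w : E₁ := (2:ℂ) • z with hw
        set m : E₁ := ((2:ℂ)⁻¹) • (x + y) with hm
        have hnw : ‖w‖ = 2 * R := by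
          rw [hw, norm_smul, hnz]; norm_num
        have hmx : ‖x‖ + ‖w - x‖ > M := by
          have := norm_add_le x (w - x)
          simp only [add_sub_cancel] at this
          have : 2 * R ≤ ‖x‖ + ‖w - x‖ := hnw ▸ this
          linarith [norm_nonneg x, norm_nonneg y]
        have hmy : ‖y‖ + ‖w - y‖ > M := by
          have := norm_add_le y (w - y)
          simp only [add_sub_cancel] at this
          have : 2 * R ≤ ‖y‖ + ‖w - y‖ := hnw ▸ this
          linarith [norm_nonneg x, norm_nonneg y]
        have hmm : ‖m‖ + ‖w - m‖ > M := by
          have := norm_add_le m (w - m)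
          simp only [add_sub_cancel] at this
          have : 2 * R ≤ ‖m‖ + ‖w - m‖ := hnw ▸ this
          linarith [norm_nonneg x, norm_nonneg y]
        have hmw : ‖w - x‖ + ‖w - y‖ > M := by
          have h1 : ‖(w - x) + (w - y)‖ ≤ ‖w - x‖ + ‖w - y‖ := norm_add_le _ _
          have heq : (w - x) + (w - y) = (w + w) - (x + y) := by abel
          rw [heq] at h1
          have h3 : ‖w + w‖ - ‖x + y‖ ≤ ‖(w + w) - (x + y)‖ :=
            norm_sub_norm_le _ _
          have h5 : ‖w + w‖ = 2 * ‖w‖ := by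
            rw [← two_smul ℂ w, norm_smul]; norm_num
          have h4 : ‖x + y‖ ≤ ‖x‖ + ‖y‖ := norm_add_le x y
          linarith
        have e1 : ((2:ℂ)⁻¹) • (x + (w - x)) = z := by
          rw [hw]; module
        have e2 : ((2:ℂ)⁻¹) • (y + (w - y)) = z := by
          rw [hw]; module
        have e3 : ((2:ℂ)⁻¹) • (m + (w - m)) = z := by
          rw [hw, hm]; module
        have e4 : ((2:ℂ)⁻¹) • ((w - x) + (w - y)) = w - m := by
          rw [hw, hm]; module
        have h1 := hMε x (w - x) hmx
        rw [e1] at h1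
        have h2 := hMε y (w - y) hmy
        rw [e2] at h2
        have h3 := hMε m (w - m) hmm
        rw [e3] at h3
        have h4 := hMε (w - x) (w - y) hmw
        rw [e4] at h4
        have hid : (2 : ℂ) • J m - J x - J y =
            ((2:ℂ) • J z - J x - J (w - x)) + ((2:ℂ) • J z - J y - J (w - y))
            - (2:ℂ) • ((2:ℂ) • J z - J m - J (w - m))
            - ((2:ℂ) • J (w - m) - J (w - x) - J (w - y)) := by
          module
        rw [hid]
        have n3 : ‖(2:ℂ) • ((2:ℂ) • J z - J m - J (w - m))‖ ≤ 2 * ε := by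
          rw [norm_smul]
          have h2n : ‖(2:ℂ)‖ = 2 := by norm_num
          rw [h2n]; linarith
        calc ‖((2:ℂ) • J z - J x - J (w - x)) + ((2:ℂ) • J z - J y - J (w - y))
            - (2:ℂ) • ((2:ℂ) • J z - J m - J (w - m))
            - ((2:ℂ) • J (w - m) - J (w - x) - J (w - y))‖
            ≤ ‖((2:ℂ) • J z - J x - J (w - x)) + ((2:ℂ) • J z - J y - J (w - y))
              - (2:ℂ) • ((2:ℂ) • J z - J m - J (w - m))‖
              + ‖(2:ℂ) • J (w - m) - J (w - x) - J (w - y)‖ := norm_sub_le _ _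
          _ ≤ ‖((2:ℂ) • J z - J x - J (w - x)) + ((2:ℂ) • J z - J y - J (w - y))‖
              + ‖(2:ℂ) • ((2:ℂ) • J z - J m - J (w - m))‖
              + ‖(2:ℂ) • J (w - m) - J (w - x) - J (w - y)‖ := by
                have := norm_sub_le (((2:ℂ) • J z - J x - J (w - x)) +
                  ((2:ℂ) • J z - J y - J (w - y)))
                  ((2:ℂ) • ((2:ℂ) • J z - J m - J (w - m)))
                linarith
          _ ≤ 5 * ε := by
                have := norm_add_le ((2:ℂ) • J z - J x - J (w - x))
                  ((2:ℂ) • J z - J y - J (w - y))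
                linarith
      have hle : ‖(2 : ℂ) • J (((2 : ℂ)⁻¹) • (x + y)) - J x - J y‖ ≤ 0 := by
        refine le_of_forall_pos_le_add ?_
        intro ε hε
        have := key (ε / 5) (by linarith)
        linarith
      have h0 : (2 : ℂ) • J (((2 : ℂ)⁻¹) • (x + y)) - J x - J y = 0 :=
        norm_le_zero_iff.mp hle
      rw [sub_sub, sub_eq_zero] at h0
      exact h0
    · push_neg at hv
      rw [hv x, hv y]
      simp [hJ0, two_smul]
  · intro h ε hε
    refine ⟨1, one_pos, fun x y _ => ?_⟩
    rw [h x y]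
    simp [hε.le]
end

section
/- Let S be a nonempty set, B a complex Banach space, ρ : S → S, p : S → ℂ \ {0}, q : S → B, ψ : S → [0,∞), and 0 < L < 1 with ψ(ρ(x)) ≤ L·|p(ρ(x))|·ψ(x) for all x ∈ S. If f : S → B satisfies ‖f(ρ(x)) − p(x)f(x) − q(x)‖ ≤ ψ(x) for all x ∈ S, then there exists a unique function T : S → B with T(ρ(x)) = p(x)T(x) + q(x) for all x ∈ S and ‖f(x) − T(x)‖ ≤ ψ(x)/((1−L)|p(x)|) for all x ∈ S. -/
theorem stmt_16 {S : Type*} [Nonempty S] {B : Type*} [NormedAddCommGroup B]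
    [NormedSpace ℂ B] [CompleteSpace B]
    (ρ : S → S) (p : S → ℂ) (hp : ∀ x : S, p x ≠ 0) (q : S → B)
    (ψ : S → ℝ) (hψ0 : ∀ x : S, 0 ≤ ψ x)
    (L : ℝ) (hL0 : 0 < L) (hL1 : L < 1)
    (hψ : ∀ x : S, ψ (ρ x) ≤ L * ‖p (ρ x)‖ * ψ x)
    (f : S → B) (hf : ∀ x : S, ‖f (ρ x) - p x • f x - q x‖ ≤ ψ x) :
    ∃! T : S → B, (∀ x : S, T (ρ x) = p x • T x + q x) ∧
      (∀ x : S, ‖f x - T x‖ ≤ ψ x / ((1 - L) * ‖p x‖)) := by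
  classical
  set A : S → ℝ := fun x => ‖p x‖ with hA
  have hA0 : ∀ x, 0 < A x := fun x => by
    simpa [hA] using (norm_pos_iff.mpr (hp x))
  have h1L : (0:ℝ) < 1 - L := by linarith
  set J : (S → B) → (S → B) := fun g x => (p x)⁻¹ • (g (ρ x) - q x) with hJ
  have hJdiff : ∀ (g h : S → B) (x : S),
      ‖J g x - J h x‖ = (A x)⁻¹ * ‖g (ρ x) - h (ρ x)‖ := by
    intro g h x
    have hd : J g x - J h x = (p x)⁻¹ • (g (ρ x) - h (ρ x)) := by
      simp only [hJ, ← smul_sub]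
      congr 1
      abel
    rw [hd, norm_smul, norm_inv]
  have hw : ∀ x, ψ (ρ x) / A (ρ x) ≤ L * ψ x := by
    intro x
    rw [div_le_iff₀ (hA0 (ρ x))]
    calc ψ (ρ x) ≤ L * A (ρ x) * ψ x := hψ x
      _ = L * ψ x * A (ρ x) := by ring
  -- key geometric estimate
  have key : ∀ n : ℕ, ∀ x : S, ‖(J^[n+1] f) x - (J^[n] f) x‖ ≤ L ^ n * (ψ x / A x) := by
    intro n
    induction n with
    | zero =>
      intro x
      have hd : J f x - f x = (p x)⁻¹ • (f (ρ x) - p x • f x - q x) := by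
        simp only [hJ, smul_sub, smul_smul, inv_mul_cancel₀ (hp x), one_smul]
        abel
      simp only [zero_add, Function.iterate_one, Function.iterate_zero, id_eq]
      rw [hd, norm_smul, norm_inv]
      rw [pow_zero, one_mul, div_eq_inv_mul]
      exact mul_le_mul_of_nonneg_left (hf x) (by positivity)
    | succ n ih =>
      intro x
      have ih' := ih (ρ x)
      rw [Function.iterate_succ_apply' J n f] at ih'
      rw [Function.iterate_succ_apply' J (n+1) f, Function.iterate_succ_apply' J n f,
        hJdiff]
      calc (A x)⁻¹ * ‖J (J^[n] f) (ρ x) - (J^[n] f) (ρ x)‖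
          ≤ (A x)⁻¹ * (L ^ n * (ψ (ρ x) / A (ρ x))) := by
            apply mul_le_mul_of_nonneg_left ih' (by positivity)
        _ ≤ (A x)⁻¹ * (L ^ n * (L * ψ x)) := by
            apply mul_le_mul_of_nonneg_left _ (by positivity)
            exact mul_le_mul_of_nonneg_left (hw x) (by positivity)
        _ = L ^ (n+1) * (ψ x / A x) := by
            field_simp
            ring
  have hdist : ∀ x : S, ∀ n : ℕ,
      dist ((J^[n] f) x) ((J^[n+1] f) x) ≤ (ψ x / A x) * L ^ n := by
    intro x n
    rw [dist_eq_norm, norm_sub_rev]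
    calc ‖(J^[n+1] f) x - (J^[n] f) x‖ ≤ L ^ n * (ψ x / A x) := key n x
      _ = (ψ x / A x) * L ^ n := by ring
  have hcauchy : ∀ x : S, CauchySeq (fun n => (J^[n] f) x) := fun x =>
    cauchySeq_of_le_geometric L (ψ x / A x) hL1 (hdist x)
  choose T hT using fun x => cauchySeq_tendsto_of_complete (hcauchy x)
  -- T satisfies the functional equation
  have hTeq : ∀ x : S, T (ρ x) = p x • T x + q x := by
    intro x
    have h1 : Filter.Tendsto (fun n => (J^[n+1] f) x) Filter.atTop (nhds (T x)) :=
      (hT x).comp (Filter.tendsto_add_atTop_nat 1)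
    have h2 : Filter.Tendsto (fun n => (p x)⁻¹ • ((J^[n] f) (ρ x) - q x))
        Filter.atTop (nhds ((p x)⁻¹ • (T (ρ x) - q x))) :=
      ((hT (ρ x)).sub tendsto_const_nhds).const_smul _
    have heqfun : (fun n => (J^[n+1] f) x) = fun n => (p x)⁻¹ • ((J^[n] f) (ρ x) - q x) := by
      funext n
      rw [Function.iterate_succ_apply' J n f]
    rw [heqfun] at h1
    have hTx : T x = (p x)⁻¹ • (T (ρ x) - q x) := tendsto_nhds_unique h1 h2
    have : p x • T x = T (ρ x) - q x := by
      rw [hTx, smul_smul, mul_inv_cancel₀ (hp x), one_smul]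
    rw [this]
    abel
  -- bound
  have hTbd : ∀ x : S, ‖f x - T x‖ ≤ ψ x / ((1 - L) * A x) := by
    intro x
    have h0 : dist ((fun n => (J^[n] f) x) 0) (T x) ≤ (ψ x / A x) / (1 - L) :=
      dist_le_of_le_geometric_of_tendsto₀ L (ψ x / A x) hL1 (hdist x) (hT x)
    simp only [Function.iterate_zero, id_eq, dist_eq_norm] at h0
    calc ‖f x - T x‖ ≤ (ψ x / A x) / (1 - L) := h0
      _ = ψ x / ((1 - L) * A x) := by rw [div_div]; ring_nf
  refine ⟨T, ⟨hTeq, hTbd⟩, ?_⟩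
  rintro T' ⟨hT'eq, hT'bd⟩
  funext x
  have main : ∀ n : ℕ, ∀ x : S, ‖T' x - T x‖ ≤ 2 * (L ^ n * (ψ x / ((1 - L) * A x))) := by
    intro n
    induction n with
    | zero =>
      intro x
      have hd : T' x - T x = (f x - T x) - (f x - T' x) := by abel
      calc ‖T' x - T x‖ ≤ ‖f x - T x‖ + ‖f x - T' x‖ := by
            rw [hd]; exact norm_sub_le _ _
        _ ≤ ψ x / ((1 - L) * A x) + ψ x / ((1 - L) * A x) := add_le_add (hTbd x) (hT'bd x)
        _ = 2 * (L ^ 0 * (ψ x / ((1 - L) * A x))) := by ring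
    | succ n ih =>
      intro x
      have hsub : T' x - T x = (p x)⁻¹ • (T' (ρ x) - T (ρ x)) := by
        rw [hT'eq x, hTeq x]
        simp only [add_sub_add_right_eq_sub, ← smul_sub, smul_smul,
          inv_mul_cancel₀ (hp x), one_smul]
      rw [hsub, norm_smul, norm_inv]
      calc (A x)⁻¹ * ‖T' (ρ x) - T (ρ x)‖
          ≤ (A x)⁻¹ * (2 * (L ^ n * (ψ (ρ x) / ((1 - L) * A (ρ x))))) :=
            mul_le_mul_of_nonneg_left (ih (ρ x)) (by positivity)
        _ ≤ (A x)⁻¹ * (2 * (L ^ n * ((L * ψ x) / (1 - L)))) := by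
            apply mul_le_mul_of_nonneg_left _ (by positivity)
            apply mul_le_mul_of_nonneg_left _ (by norm_num)
            apply mul_le_mul_of_nonneg_left _ (by positivity)
            rw [div_le_div_iff₀ (mul_pos h1L (hA0 (ρ x))) h1L]
            calc ψ (ρ x) * (1 - L) ≤ (L * A (ρ x) * ψ x) * (1 - L) := by
                  exact mul_le_mul_of_nonneg_right (hψ x) (le_of_lt h1L)
              _ = L * ψ x * ((1 - L) * A (ρ x)) := by ring
        _ = 2 * (L ^ (n+1) * (ψ x / ((1 - L) * A x))) := by
            field_simp
            ring
  have hlim : Filter.Tendsto (fun n : ℕ => 2 * (L ^ n * (ψ x / ((1 - L) * A x))))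
      Filter.atTop (nhds 0) := by
    have : Filter.Tendsto (fun n : ℕ => (L : ℝ) ^ n) Filter.atTop (nhds 0) :=
      tendsto_pow_atTop_nhds_zero_of_lt_one (le_of_lt hL0) hL1
    simpa using (this.mul_const (ψ x / ((1 - L) * A x))).const_mul 2
  have hle : ‖T' x - T x‖ ≤ 0 := ge_of_tendsto' hlim (fun n => main n x)
  exact sub_eq_zero.mp (norm_le_zero_iff.mp hle)
end

section
/- Let S be a nonempty set, B a complex Banach space, ρ : S → S a bijection, p : S → ℂ \ {0}, q : S → B, ψ : S → [0,∞), and 0 < L < 1 with |p(x)|·ψ(ρ⁻¹(x)) ≤ L·ψ(x) for all x ∈ S. If f : S → B satisfies ‖f(ρ(x)) − p(x)f(x) − q(x)‖ ≤ ψ(x) for all x ∈ S, then there exists a unique T : S → B with T(ρ(x)) = p(x)T(x) + q(x) and ‖f(x) − T(x)‖ ≤ ψ(ρ⁻¹(x))/(1−L) for all x ∈ S. -/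
theorem stmt_17 {S : Type*} [Nonempty S] {B : Type*} [NormedAddCommGroup B]
    [NormedSpace ℂ B] [CompleteSpace B]
    (ρ : S ≃ S) (p : S → ℂ) (hp : ∀ x : S, p x ≠ 0) (q : S → B)
    (ψ : S → ℝ) (hψ0 : ∀ x : S, 0 ≤ ψ x)
    (L : ℝ) (hL0 : 0 < L) (hL1 : L < 1)
    (hψ : ∀ x : S, ‖p x‖ * ψ (ρ.symm x) ≤ L * ψ x)
    (f : S → B) (hf : ∀ x : S, ‖f (ρ x) - p x • f x - q x‖ ≤ ψ x) :
    ∃! T : S → B, (∀ x : S, T (ρ x) = p x • T x + q x) ∧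
      (∀ x : S, ‖f x - T x‖ ≤ ψ (ρ.symm x) / (1 - L)) := by
  classical
  set ε : S → ℝ := fun x => ψ (ρ.symm x) with hε
  set Λ : (S → B) → (S → B) :=
    fun g x => p (ρ.symm x) • g (ρ.symm x) + q (ρ.symm x) with hΛ
  have contr : ∀ (c : ℝ) (g h : S → B), 0 ≤ c →
      (∀ y, ‖g y - h y‖ ≤ c * ε y) → ∀ x, ‖Λ g x - Λ h x‖ ≤ (L * c) * ε x := by
    intro c g h hc hgh x
    have hrw : Λ g x - Λ h x = p (ρ.symm x) • (g (ρ.symm x) - h (ρ.symm x)) := by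
      simp only [hΛ, smul_sub]; abel
    rw [hrw, norm_smul]
    calc ‖p (ρ.symm x)‖ * ‖g (ρ.symm x) - h (ρ.symm x)‖
        ≤ ‖p (ρ.symm x)‖ * (c * ε (ρ.symm x)) :=
          mul_le_mul_of_nonneg_left (hgh _) (norm_nonneg _)
      _ = c * (‖p (ρ.symm x)‖ * ψ (ρ.symm (ρ.symm x))) := by
          simp only [hε]; ring
      _ ≤ c * (L * ψ (ρ.symm x)) := mul_le_mul_of_nonneg_left (hψ _) hc
      _ = (L * c) * ε x := by simp only [hε]; ring
  have step : ∀ n x, ‖(Λ^[n] f) x - (Λ^[n+1] f) x‖ ≤ L ^ n * ε x := by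
    intro n
    induction n with
    | zero =>
      intro x
      have h := hf (ρ.symm x)
      simp only [Equiv.apply_symm_apply] at h
      simpa [hΛ, hε, sub_sub] using h
    | succ n ih =>
      intro x
      have h := contr (L ^ n) (Λ^[n] f) (Λ^[n+1] f) (by positivity) ih x
      rw [← Function.iterate_succ_apply' Λ n f, ← Function.iterate_succ_apply' Λ (n+1) f] at h
      calc ‖(Λ^[n+1] f) x - (Λ^[n+2] f) x‖ ≤ L * L ^ n * ε x := h
        _ = L ^ (n+1) * ε x := by ring
  have hdist : ∀ x n, dist ((Λ^[n] f) x) ((Λ^[n+1] f) x) ≤ ε x * L ^ n := by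
    intro x n
    rw [dist_eq_norm, mul_comm]
    exact step n x
  have hcauchy : ∀ x, ∃ b, Filter.Tendsto (fun n => (Λ^[n] f) x) Filter.atTop (nhds b) := by
    intro x
    exact cauchySeq_tendsto_of_complete (cauchySeq_of_le_geometric L (ε x) hL1 (hdist x))
  choose T hT using hcauchy
  have hfix : ∀ x, T (ρ x) = p x • T x + q x := by
    intro x
    have h1 : Filter.Tendsto (fun n => (Λ^[n+1] f) (ρ x)) Filter.atTop (nhds (T (ρ x))) :=
      (hT (ρ x)).comp (Filter.tendsto_add_atTop_nat 1)
    have h2 : ∀ n, (Λ^[n+1] f) (ρ x) = p x • (Λ^[n] f) x + q x := by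
      intro n
      rw [Function.iterate_succ_apply']
      simp [hΛ]
    have h3 : Filter.Tendsto (fun n => p x • (Λ^[n] f) x + q x) Filter.atTop
        (nhds (p x • T x + q x)) :=
      ((hT x).const_smul (p x)).add tendsto_const_nhds
    refine tendsto_nhds_unique ?_ h3
    simpa only [h2] using h1
  have hbound : ∀ x, ‖f x - T x‖ ≤ ψ (ρ.symm x) / (1 - L) := by
    intro x
    have := dist_le_of_le_geometric_of_tendsto₀ L (ε x) hL1 (hdist x) (hT x)
    simpa [dist_eq_norm, hε] using this
  refine ⟨T, ⟨hfix, hbound⟩, ?_⟩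
  rintro T' ⟨hT'eq, hT'bd⟩
  have hfixΛ : ∀ (U : S → B), (∀ x, U (ρ x) = p x • U x + q x) → ∀ x, Λ U x = U x := by
    intro U hU x
    have := hU (ρ.symm x)
    simp only [Equiv.apply_symm_apply] at this
    simp [hΛ, this]
  have key : ∀ n x, ‖T' x - T x‖ ≤ L ^ n * ((2 / (1 - L)) * ε x) := by
    intro n
    induction n with
    | zero =>
      intro x
      have h1 := hT'bd x
      have h2 := hbound x
      calc ‖T' x - T x‖ ≤ ‖f x - T' x‖ + ‖f x - T x‖ := by
            rw [← norm_neg (f x - T' x)]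
            simpa using norm_add_le (-(f x - T' x)) (f x - T x)
        _ ≤ ψ (ρ.symm x) / (1 - L) + ψ (ρ.symm x) / (1 - L) := add_le_add h1 h2
        _ = L ^ 0 * ((2 / (1 - L)) * ε x) := by simp [hε]; ring
    | succ n ih =>
      intro x
      have h1L : (0:ℝ) < 1 - L := by linarith
      have h := contr (L ^ n * (2 / (1 - L))) T' T
        (mul_nonneg (pow_nonneg hL0.le n) (div_nonneg (by norm_num) h1L.le))
        (fun y => by simpa [mul_assoc] using ih y) x
      rw [hfixΛ T' hT'eq x, hfixΛ T hfix x] at h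
      calc ‖T' x - T x‖ ≤ L * (L ^ n * (2 / (1 - L))) * ε x := h
        _ = L ^ (n+1) * ((2 / (1 - L)) * ε x) := by ring
  funext x
  have h0 : Filter.Tendsto (fun n => L ^ n * ((2 / (1 - L)) * ε x)) Filter.atTop (nhds 0) := by
    have := tendsto_pow_atTop_nhds_zero_of_lt_one (le_of_lt hL0) hL1
    simpa using this.mul_const ((2 / (1 - L)) * ε x)
  have : ‖T' x - T x‖ ≤ 0 :=
    le_of_tendsto_of_tendsto' tendsto_const_nhds h0 (fun n => key n x)
  have := le_antisymm this (norm_nonneg _)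
  rwa [norm_eq_zero, sub_eq_zero] at this
end

section
/- Let S be a nonempty set, B a complex Banach space, ρ : S → S, p : S → ℂ \ {0}, q : S → B, with a ≤ |p(x)| for all x ∈ S and some real a > 1. Then for every δ > 0: any f : S → B satisfying ‖f(ρ(x)) − p(x)f(x) − q(x)‖ ≤ δ for all x ∈ S admits a unique T : S → B with T(ρ(x)) = p(x)T(x) + q(x) and ‖f(x) − T(x)‖ ≤ aδ/(a−1) for all x ∈ S. -/
open Filter Topology

theorem stmt_18 {S : Type*} [Nonempty S] {B : Type*} [NormedAddCommGroup B]
    [NormedSpace ℂ B] [CompleteSpace B]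
    (ρ : S → S) (p : S → ℂ) (hp : ∀ x : S, p x ≠ 0) (q : S → B)
    (a : ℝ) (ha : 1 < a) (hpa : ∀ x : S, a ≤ ‖p x‖)
    (δ : ℝ) (hδ : 0 < δ)
    (f : S → B) (hf : ∀ x : S, ‖f (ρ x) - p x • f x - q x‖ ≤ δ) :
    ∃! T : S → B, (∀ x : S, T (ρ x) = p x • T x + q x) ∧
      (∀ x : S, ‖f x - T x‖ ≤ a * δ / (a - 1)) := by
  have ha0 : (0:ℝ) < a := lt_trans one_pos ha
  have hainv : a⁻¹ < 1 := inv_lt_one_of_one_lt₀ ha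
  have hainv0 : (0:ℝ) < a⁻¹ := inv_pos.mpr ha0
  -- norm of (p x)⁻¹ • v
  have hsmul : ∀ (x : S) (v : B), ‖(p x)⁻¹ • v‖ ≤ a⁻¹ * ‖v‖ := by
    intro x v
    rw [norm_smul, norm_inv]
    have hpx : (0:ℝ) < ‖p x‖ := norm_pos_iff.mpr (hp x)
    have : ‖p x‖⁻¹ ≤ a⁻¹ := by
      apply inv_anti₀ ha0
      exact hpa x
    exact mul_le_mul_of_nonneg_right this (norm_nonneg v)
  set Φ : (S → B) → (S → B) := fun g x => (p x)⁻¹ • (g (ρ x) - q x) with hΦ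
  set u : ℕ → S → B := fun n => Φ^[n] f with hu
  have hs : ∀ n, u (n+1) = Φ (u n) := fun n => Function.iterate_succ_apply' Φ n f
  have hd : ∀ (g h : S → B) (x : S), Φ g x - Φ h x = (p x)⁻¹ • (g (ρ x) - h (ρ x)) := by
    intro g h x
    simp only [hΦ]
    rw [smul_sub, smul_sub, smul_sub]
    abel
  have husucc : ∀ n x, u (n+1) x = (p x)⁻¹ • (u n (ρ x) - q x) := by
    intro n x
    rw [hs n]
  -- contraction step
  have key : ∀ n x, ‖u (n+1) x - u n x‖ ≤ (δ / a) * (a⁻¹) ^ n := by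
    intro n
    induction n with
    | zero =>
      intro x
      have e : Φ f x - f x = (p x)⁻¹ • (f (ρ x) - p x • f x - q x) := by
        simp only [hΦ]
        rw [smul_sub, smul_sub, smul_sub, inv_smul_smul₀ (hp x)]
        abel
      have e2 : u 1 x - u 0 x = (p x)⁻¹ • (f (ρ x) - p x • f x - q x) := e
      rw [e2]
      calc ‖(p x)⁻¹ • (f (ρ x) - p x • f x - q x)‖
          ≤ a⁻¹ * ‖f (ρ x) - p x • f x - q x‖ := hsmul x _
        _ ≤ a⁻¹ * δ := mul_le_mul_of_nonneg_left (hf x) (le_of_lt hainv0)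
        _ = δ / a * a⁻¹ ^ 0 := by rw [pow_zero, mul_one, div_eq_mul_inv, mul_comm]
    | succ n ih =>
      intro x
      calc ‖u (n+1+1) x - u (n+1) x‖
          = ‖(p x)⁻¹ • (u (n+1) (ρ x) - u n (ρ x))‖ := by
            rw [hs (n+1), hs n, hd]
        _ ≤ a⁻¹ * ‖u (n+1) (ρ x) - u n (ρ x)‖ := hsmul x _
        _ ≤ a⁻¹ * ((δ / a) * a⁻¹ ^ n) :=
            mul_le_mul_of_nonneg_left (ih (ρ x)) (le_of_lt hainv0)
        _ = (δ / a) * a⁻¹ ^ (n+1) := by ring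
  have keyd : ∀ x n, dist (u n x) (u (n+1) x) ≤ (δ / a) * (a⁻¹) ^ n := by
    intro x n
    rw [dist_eq_norm, norm_sub_rev]
    exact key n x
  have hcauchy : ∀ x, CauchySeq (fun n => u n x) :=
    fun x => cauchySeq_of_le_geometric a⁻¹ (δ / a) hainv (keyd x)
  have hex : ∀ x, ∃ y, Tendsto (fun n => u n x) atTop (𝓝 y) :=
    fun x => cauchySeq_tendsto_of_complete (hcauchy x)
  choose T hT using hex
  have hTeq : ∀ x, T x = (p x)⁻¹ • (T (ρ x) - q x) := by
    intro x
    have h1 : Tendsto (fun n => u (n+1) x) atTop (𝓝 (T x)) :=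
      (hT x).comp (tendsto_add_atTop_nat 1)
    have h2 : Tendsto (fun n => (p x)⁻¹ • (u n (ρ x) - q x)) atTop
        (𝓝 ((p x)⁻¹ • (T (ρ x) - q x))) :=
      (((hT (ρ x)).sub tendsto_const_nhds).const_smul _)
    have : (fun n => u (n+1) x) = fun n => (p x)⁻¹ • (u n (ρ x) - q x) := by
      funext n; exact husucc n x
    rw [this] at h1
    exact tendsto_nhds_unique h1 h2
  have hTfe : ∀ x, T (ρ x) = p x • T x + q x := by
    intro x
    rw [hTeq x, smul_inv_smul₀ (hp x)]
    abel
  have hbound : ∀ x, ‖f x - T x‖ ≤ a * δ / (a - 1) := by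
    intro x
    have := dist_le_of_le_geometric_of_tendsto₀ a⁻¹ (δ / a) hainv (keyd x) (hT x)
    rw [dist_eq_norm] at this
    have hu0 : u 0 x = f x := rfl
    rw [hu0] at this
    have heq : δ / a / (1 - a⁻¹) = δ / (a - 1) := by
      field_simp
    rw [heq] at this
    refine this.trans ?_
    apply div_le_div_of_nonneg_right ?_ (by linarith)
    · nlinarith
  refine ⟨T, ⟨hTfe, hbound⟩, ?_⟩
  rintro T' ⟨hT'fe, hT'bound⟩
  -- uniqueness
  have hdiff : ∀ n x, ‖T' x - T x‖ ≤ (2 * (a * δ / (a - 1))) * (a⁻¹) ^ n := by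
    intro n
    induction n with
    | zero =>
      intro x
      simp only [pow_zero, mul_one]
      calc ‖T' x - T x‖ = ‖(T' x - f x) + (f x - T x)‖ := by abel_nf
        _ ≤ ‖T' x - f x‖ + ‖f x - T x‖ := norm_add_le _ _
        _ ≤ a * δ / (a - 1) + a * δ / (a - 1) := by
            have := hT'bound x
            rw [norm_sub_rev] at this
            exact add_le_add this (hbound x)
        _ = 2 * (a * δ / (a - 1)) := by ring
    | succ n ih =>
      intro x
      have hTx : T x = (p x)⁻¹ • (T (ρ x) - q x) := hTeq x
      have hT'x : T' x = (p x)⁻¹ • (T' (ρ x) - q x) := by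
        rw [hT'fe x, add_sub_cancel_right, inv_smul_smul₀ (hp x)]
      have : T' x - T x = (p x)⁻¹ • (T' (ρ x) - T (ρ x)) := by
        rw [hTx, hT'x, smul_sub, smul_sub, smul_sub]
        abel
      rw [this]
      calc ‖(p x)⁻¹ • (T' (ρ x) - T (ρ x))‖
          ≤ a⁻¹ * ‖T' (ρ x) - T (ρ x)‖ := hsmul x _
        _ ≤ a⁻¹ * ((2 * (a * δ / (a - 1))) * a⁻¹ ^ n) :=
            mul_le_mul_of_nonneg_left (ih (ρ x)) (le_of_lt hainv0)
        _ = (2 * (a * δ / (a - 1))) * a⁻¹ ^ (n+1) := by ring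
  funext x
  have hlim : Tendsto (fun n : ℕ => (2 * (a * δ / (a - 1))) * (a⁻¹) ^ n) atTop (𝓝 0) := by
    rw [show (0:ℝ) = (2 * (a * δ / (a - 1))) * 0 by ring]
    exact (tendsto_pow_atTop_nhds_zero_of_lt_one (le_of_lt hainv0) hainv).const_mul _
  have : ‖T' x - T x‖ ≤ 0 := by
    refine le_of_tendsto_of_tendsto' tendsto_const_nhds hlim (fun n => hdiff n x)
  have := le_antisymm this (norm_nonneg _)
  rwa [norm_eq_zero, sub_eq_zero] at this
end

section
/- For every θ > 0 there is no constant δ ∈ [0,∞) such that every function f : ℝ → ℝ satisfying |f(2x) − 2f(x)| ≤ θ|x| for all x ∈ ℝ admits a function T : ℝ → ℝ with T(2x) = 2T(x) for all x and |f(x) − T(x)| ≤ δ|x| for all x ∈ ℝ. -/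
theorem stmt_19 (θ : ℝ) (hθ : 0 < θ) :
    ¬ ∃ δ : ℝ, 0 ≤ δ ∧ ∀ f : ℝ → ℝ,
      (∀ x : ℝ, |f (2 * x) - 2 * f x| ≤ θ * |x|) →
      ∃ T : ℝ → ℝ, (∀ x : ℝ, T (2 * x) = 2 * T x) ∧
        (∀ x : ℝ, |f x - T x| ≤ δ * |x|) := by
  rintro ⟨δ, hδ, hall⟩
  set f : ℝ → ℝ := fun x => θ / 2 * x * Real.logb 2 |x| with hf
  have hfapprox : ∀ x : ℝ, |f (2 * x) - 2 * f x| ≤ θ * |x| := by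
    intro x
    rcases eq_or_ne x 0 with rfl | hx
    · simp [hf]
    · have h2 : Real.logb 2 |2 * x| = 1 + Real.logb 2 |x| := by
        rw [abs_mul, abs_two, Real.logb_mul (by norm_num) (abs_ne_zero.mpr hx)]
        have : Real.logb 2 2 = 1 := by
          simp [Real.logb_self_eq_one]
        rw [this]
      have : f (2 * x) - 2 * f x = θ * x := by
        simp only [hf, h2]; ring
      rw [this, abs_mul, abs_of_pos hθ]
  obtain ⟨T, hT, hTapprox⟩ := hall f hfapprox
  have hTn : ∀ n : ℕ, T ((2:ℝ) ^ n) = 2 ^ n * T 1 := by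
    intro n
    induction n with
    | zero => simp
    | succ n ih =>
      have : ((2:ℝ) ^ (n + 1)) = 2 * 2 ^ n := by ring
      rw [this, hT, ih]; ring
  have key : ∀ n : ℕ, |θ / 2 * n - T 1| ≤ δ := by
    intro n
    have h1 := hTapprox ((2:ℝ) ^ n)
    have hlog : Real.logb 2 |(2:ℝ) ^ n| = n := by
      have h22 : Real.logb 2 2 = 1 := by simp [Real.logb_self_eq_one]
      rw [abs_of_pos (by positivity), Real.logb_pow, h22]
      ring
    have hpos : (0:ℝ) < 2 ^ n := by positivity
    rw [hTn, hf] at h1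
    simp only [hlog] at h1
    have heq : θ / 2 * 2 ^ n * n - 2 ^ n * T 1 = 2 ^ n * (θ / 2 * n - T 1) := by ring
    rw [heq, abs_mul, abs_of_pos hpos] at h1
    exact le_of_mul_le_mul_left (by linarith [h1]) hpos
  obtain ⟨n, hn⟩ := exists_nat_gt ((δ + |T 1|) / (θ / 2))
  have hn' : δ + |T 1| < θ / 2 * n := by
    rwa [div_lt_iff₀ (by linarith), mul_comm] at hn
  have := key n
  have habs : θ / 2 * n - |T 1| ≤ |θ / 2 * n - T 1| := by
    calc θ / 2 * n - |T 1| ≤ |θ / 2 * n| - |T 1| := by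
          have : |θ / 2 * (n:ℝ)| = θ / 2 * n := abs_of_nonneg (by positivity)
          linarith [this]
      _ ≤ |θ / 2 * n - T 1| := abs_sub_abs_le_abs_sub _ _
  linarith
end
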